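/- Let α ∈ (0,1), let G : ℝ → ℝ be nondecreasing, and define the scoring function S(𝔞, y) := (1{y ≤ 𝔞} − α)(G(𝔞) − G(y)). Let Y be a real-valued random variable with E|G(Y)| < ∞, and let q be any α-quantile of Y, i.e. P(Y < q) ≤ α ≤ P(Y ≤ q). Then S is consistent for the α-quantile: E[S(q, Y)] ≤ E[S(𝔞, Y)] for every 𝔞 ∈ ℝ. Moreover, if G is strictly increasing and Y has a unique α-quantile q, then the inequality is strict whenever 𝔞 ≠ q. -/

import Mathlib

open MeasureTheory

/-- `q` is an `α`-quantile of `Y`: `P(Y < q) ≤ α ≤ P(Y ≤ q)`. -/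
def IsQuantile {Ω : Type*} [MeasurableSpace Ω] (P : Measure Ω) (Y : Ω → ℝ) (α q : ℝ) : Prop :=
  (P {ω | Y ω < q}).toReal ≤ α ∧ α ≤ (P {ω | Y ω ≤ q}).toReal

/-- The scoring function `S(𝔞,y) = (1{y ≤ 𝔞} − α)(G(𝔞) − G(y))` is consistent for the
`α`-quantile, and strictly consistent when `G` is strictly increasing and the `α`-quantile
is unique. -/
theorem quantile_score_consistent {Ω : Type*} [MeasurableSpace Ω] (P : Measure Ω)
    [IsProbabilityMeasure P] (α : ℝ) (hα : α ∈ Set.Ioo (0:ℝ) 1)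
    (G : ℝ → ℝ) (hG : Monotone G)
    (Y : Ω → ℝ) (hYm : Measurable Y) (hGY : Integrable (fun ω => G (Y ω)) P)
    (S : ℝ → ℝ → ℝ)
    (hS : ∀ a y : ℝ, S a y = ((if y ≤ a then (1:ℝ) else 0) - α) * (G a - G y))
    (q : ℝ) (hq : IsQuantile P Y α q) :
    (∀ a : ℝ, ∫ ω, S q (Y ω) ∂P ≤ ∫ ω, S a (Y ω) ∂P) ∧
    (StrictMono G → (∀ q' : ℝ, IsQuantile P Y α q' → q' = q) →
      ∀ a : ℝ, a ≠ q → ∫ ω, S q (Y ω) ∂P < ∫ ω, S a (Y ω) ∂P) := by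
  obtain ⟨hα0, hα1⟩ := hα
  obtain ⟨hq1, hq2⟩ := hq
  have hGmeas : Measurable G := hG.measurable
  have hgm : Measurable fun ω => G (Y ω) := hGmeas.comp hYm
  have hle : ∀ c : ℝ, MeasurableSet {ω | Y ω ≤ c} := fun c => hYm measurableSet_Iic
  have hlt : ∀ c : ℝ, MeasurableSet {ω | Y ω < c} := fun c => hYm measurableSet_Iio
  -- integrability of the scores
  have hint : ∀ a : ℝ, Integrable (fun ω => S a (Y ω)) P := by
    intro a
    have h1 : (fun ω => S a (Y ω)) =
        fun ω => ({ω | Y ω ≤ a}.indicator (fun _ => (1:ℝ)) ω - α) * (G a - G (Y ω)) := by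
      funext ω; rw [hS]; by_cases h : Y ω ≤ a <;> simp [Set.indicator, h]
    rw [h1]
    refine ((integrable_const (G a)).sub hGY).bdd_mul (c := 1) ?_ (Filter.Eventually.of_forall fun ω => ?_)
    · exact ((measurable_one.indicator (hle a)).sub measurable_const).aestronglyMeasurable
    · by_cases h : Y ω ≤ a <;>
        simp only [Set.indicator, Set.mem_setOf_eq, h, if_pos, if_neg, Real.norm_eq_abs,
          if_true, if_false, abs_le] <;> constructor <;> linarith
  -- case a > q
  have case_gt : ∀ a : ℝ, q < a →
      ∫ ω, S a (Y ω) ∂P - ∫ ω, S q (Y ω) ∂P =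
      ((P {ω | Y ω ≤ q}).toReal - α) * (G a - G q)
        + ∫ ω, ({ω | q < Y ω ∧ Y ω ≤ a}).indicator (fun ω => G a - G (Y ω)) ω ∂P := by
    intro a haq
    have hB : MeasurableSet {ω | q < Y ω ∧ Y ω ≤ a} :=
      (hYm measurableSet_Ioi).inter (hle a)
    rw [← integral_sub (hint a) (hint q)]
    have hptw : (fun ω => S a (Y ω) - S q (Y ω)) =
        fun ω => ({ω | Y ω ≤ q}.indicator (fun _ => G a - G q) ω - α * (G a - G q))
          + ({ω | q < Y ω ∧ Y ω ≤ a}).indicator (fun ω => G a - G (Y ω)) ω := by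
      funext ω
      simp only [hS, Set.indicator_apply, Set.mem_setOf_eq]
      rcases le_or_gt (Y ω) q with h1 | h1
      · have e1 : Y ω ≤ a := h1.trans haq.le
        have e2 : ¬ q < Y ω := not_lt.2 h1
        simp only [h1, e1, e2, if_true, if_false, false_and, ite_true, ite_false]
        ring
      · rcases le_or_gt (Y ω) a with h2 | h2
        · have e1 : ¬ Y ω ≤ q := not_le.2 h1
          simp only [h1, h2, e1, if_true, if_false, true_and, and_true, ite_true, ite_false]
          ring
        · have e1 : ¬ Y ω ≤ q := not_le.2 h1
          have e2 : ¬ Y ω ≤ a := not_le.2 h2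
          simp only [h1, e1, e2, if_true, if_false, true_and, and_false, ite_true, ite_false]
          ring
    have i1 : Integrable (fun ω => {ω | Y ω ≤ q}.indicator (fun _ => G a - G q) ω
        - α * (G a - G q)) P := by
      exact ((integrable_const _).indicator (hle q)).sub (integrable_const _)
    have i1a : Integrable (fun ω => {ω | Y ω ≤ q}.indicator (fun _ => G a - G q) ω) P := by
      exact (integrable_const _).indicator (hle q)
    have i2 : Integrable (fun ω =>
        ({ω | q < Y ω ∧ Y ω ≤ a}).indicator (fun ω => G a - G (Y ω)) ω) P := by
      exact ((integrable_const (G a)).sub hGY).indicator hB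
    rw [hptw, integral_add i1 i2, integral_sub i1a (integrable_const _),
      integral_indicator_const _ (hle q), integral_const]
    simp [smul_eq_mul, measureReal_def]
    ring
  -- case a < q
  have case_lt : ∀ a : ℝ, a < q →
      ∫ ω, S a (Y ω) ∂P - ∫ ω, S q (Y ω) ∂P =
      (α - (P {ω | Y ω < q}).toReal) * (G q - G a)
        + ∫ ω, ({ω | a < Y ω ∧ Y ω < q}).indicator (fun ω => G (Y ω) - G a) ω ∂P := by
    intro a haq
    have hB : MeasurableSet {ω | a < Y ω ∧ Y ω < q} :=
      (hYm measurableSet_Ioi).inter (hlt q)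
    rw [← integral_sub (hint a) (hint q)]
    have hptw : (fun ω => S a (Y ω) - S q (Y ω)) =
        fun ω => (α * (G q - G a) - {ω | Y ω < q}.indicator (fun _ => G q - G a) ω)
          + ({ω | a < Y ω ∧ Y ω < q}).indicator (fun ω => G (Y ω) - G a) ω := by
      funext ω
      simp only [hS, Set.indicator_apply, Set.mem_setOf_eq]
      rcases le_or_gt (Y ω) a with h1 | h1
      · have e1 : Y ω ≤ q := h1.trans haq.le
        have e2 : Y ω < q := lt_of_le_of_lt h1 haq
        have e3 : ¬ a < Y ω := not_lt.2 h1
        simp only [h1, e1, e2, e3, if_true, if_false, false_and, ite_true, ite_false]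
        ring
      · rcases lt_or_ge (Y ω) q with h2 | h2
        · have e1 : ¬ Y ω ≤ a := not_le.2 h1
          have e2 : Y ω ≤ q := h2.le
          simp only [h1, h2, e1, e2, if_true, if_false, true_and, and_true, ite_true, ite_false]
          ring
        · rcases le_or_gt (Y ω) q with h3 | h3
          · have heq : Y ω = q := le_antisymm h3 h2
            have e1 : ¬ Y ω ≤ a := not_le.2 (heq ▸ haq)
            have e2 : ¬ Y ω < q := not_lt.2 h2
            simp only [h3, e1, e2, if_true, if_false, and_false, ite_true, ite_false]
            rw [heq]
            ring
          · have e1 : ¬ Y ω ≤ a := not_le.2 (haq.trans h3)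
            have e2 : ¬ Y ω ≤ q := not_le.2 h3
            have e3 : ¬ Y ω < q := not_lt.2 h2
            simp only [e1, e2, e3, if_true, if_false, and_false, ite_true, ite_false]
            ring
    have i1 : Integrable (fun ω => α * (G q - G a)
        - {ω | Y ω < q}.indicator (fun _ => G q - G a) ω) P := by
      exact (integrable_const _).sub ((integrable_const _).indicator (hlt q))
    have i1a : Integrable (fun ω => {ω | Y ω < q}.indicator (fun _ => G q - G a) ω) P := by
      exact (integrable_const _).indicator (hlt q)
    have i2 : Integrable (fun ω =>
        ({ω | a < Y ω ∧ Y ω < q}).indicator (fun ω => G (Y ω) - G a) ω) P := by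
      exact (hGY.sub (integrable_const (G a))).indicator hB
    rw [hptw, integral_add i1 i2, integral_sub (integrable_const _) i1a,
      integral_indicator_const _ (hlt q), integral_const]
    simp [smul_eq_mul, measureReal_def]
    ring
  constructor
  · -- consistency
    intro a
    rcases lt_trichotomy a q with h | h | h
    · have := case_lt a h
      have ht1 : 0 ≤ (α - (P {ω | Y ω < q}).toReal) * (G q - G a) :=
        mul_nonneg (by linarith) (sub_nonneg.2 (hG h.le))
      have ht2 : 0 ≤ ∫ ω, ({ω | a < Y ω ∧ Y ω < q}).indicator (fun ω => G (Y ω) - G a) ω ∂P :=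
        integral_nonneg fun ω => Set.indicator_nonneg
          (fun ω hω => sub_nonneg.2 (hG hω.1.le)) ω
      linarith
    · rw [h]
    · have := case_gt a h
      have ht1 : 0 ≤ ((P {ω | Y ω ≤ q}).toReal - α) * (G a - G q) :=
        mul_nonneg (by linarith) (sub_nonneg.2 (hG h.le))
      have ht2 : 0 ≤ ∫ ω, ({ω | q < Y ω ∧ Y ω ≤ a}).indicator (fun ω => G a - G (Y ω)) ω ∂P :=
        integral_nonneg fun ω => Set.indicator_nonneg
          (fun ω hω => sub_nonneg.2 (hG hω.2)) ω
      linarith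
  · -- strict consistency
    intro hSM huniq a hne
    rcases hne.lt_or_gt with h | h
    · -- a < q
      have hkey := case_lt a h
      have ht2 : 0 ≤ ∫ ω, ({ω | a < Y ω ∧ Y ω < q}).indicator (fun ω => G (Y ω) - G a) ω ∂P :=
        integral_nonneg fun ω => Set.indicator_nonneg
          (fun ω hω => sub_nonneg.2 (hG hω.1.le)) ω
      rcases lt_or_eq_of_le hq1 with hcase | hcase
      · have ht1 : 0 < (α - (P {ω | Y ω < q}).toReal) * (G q - G a) :=
          mul_pos (by linarith) (sub_pos.2 (hSM h))
        linarith
      · -- P(Y<q) = α; use uniqueness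
        set q' : ℝ := (a + q) / 2 with hq'
        have haq' : a < q' := by rw [hq']; linarith
        have hq'q : q' < q := by rw [hq']; linarith
        have hlt' : (P {ω | Y ω ≤ q'}).toReal < α := by
          by_contra hcon
          push_neg at hcon
          have hmono : (P {ω | Y ω < q'}).toReal ≤ (P {ω | Y ω < q}).toReal :=
            ENNReal.toReal_mono (measure_ne_top _ _)
              (measure_mono fun ω hω => lt_trans hω hq'q)
          have : IsQuantile P Y α q' := ⟨by linarith, hcon⟩
          have := huniq q' this
          linarith [hq'q.ne this]
          -- contradiction: q' = q but q' < q
        -- the set t = {q' < Y < q} has positive measure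
        set t : Set Ω := {ω | Y ω < q} \ {ω | Y ω ≤ q'} with hts
        have htmeas : MeasurableSet t := (hlt q).diff (hle q')
        have htpos : P t ≠ 0 := by
          intro h0
          have hsub : P {ω | Y ω < q} ≤ P {ω | Y ω ≤ q'} := by
            calc P {ω | Y ω < q} ≤ P ({ω | Y ω ≤ q'} ∪ t) := by
                  refine measure_mono fun ω hω => ?_
                  by_cases hc : Y ω ≤ q'
                  · exact Or.inl hc
                  · exact Or.inr ⟨hω, hc⟩
              _ ≤ P {ω | Y ω ≤ q'} + P t := measure_union_le _ _
              _ = P {ω | Y ω ≤ q'} := by rw [h0, add_zero]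
          have := ENNReal.toReal_mono (measure_ne_top _ _) hsub
          linarith
        have htr : 0 < (P t).toReal := ENNReal.toReal_pos htpos (measure_ne_top _ _)
        -- lower bound the second integral
        have hlb : ∫ ω, t.indicator (fun _ => G q' - G a) ω ∂P ≤
            ∫ ω, ({ω | a < Y ω ∧ Y ω < q}).indicator (fun ω => G (Y ω) - G a) ω ∂P := by
          refine integral_mono ((integrable_const _).indicator htmeas)
            ((hGY.sub (integrable_const (G a))).indicator
              ((hYm measurableSet_Ioi).inter (hlt q))) fun ω => ?_
          by_cases hω : ω ∈ t
          · have h1 := hω.1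
            have h2 : q' < Y ω := not_le.1 hω.2
            have hmem : ω ∈ {ω | a < Y ω ∧ Y ω < q} := ⟨lt_trans haq' h2, h1⟩
            rw [Set.indicator_of_mem hω, Set.indicator_of_mem hmem]
            exact sub_le_sub_right (hG h2.le) _
          · rw [Set.indicator_of_notMem hω]
            exact Set.indicator_nonneg (fun ω hω => sub_nonneg.2 (hG hω.1.le)) ω
        have hval : ∫ ω, t.indicator (fun _ => G q' - G a) ω ∂P = (P t).toReal * (G q' - G a) := by
          rw [integral_indicator_const _ htmeas, smul_eq_mul, measureReal_def]
        have : 0 < (P t).toReal * (G q' - G a) :=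
          mul_pos htr (sub_pos.2 (hSM haq'))
        have ht1 : (α - (P {ω | Y ω < q}).toReal) * (G q - G a) = 0 := by
          rw [hcase]; ring
        linarith
    · -- q < a
      have hkey := case_gt a h
      have ht2 : 0 ≤ ∫ ω, ({ω | q < Y ω ∧ Y ω ≤ a}).indicator (fun ω => G a - G (Y ω)) ω ∂P :=
        integral_nonneg fun ω => Set.indicator_nonneg
          (fun ω hω => sub_nonneg.2 (hG hω.2)) ω
      rcases lt_or_eq_of_le hq2 with hcase | hcase
      · have ht1 : 0 < ((P {ω | Y ω ≤ q}).toReal - α) * (G a - G q) :=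
          mul_pos (by linarith) (sub_pos.2 (hSM h))
        linarith
      · set q' : ℝ := (q + a) / 2 with hq'
        have hqq' : q < q' := by rw [hq']; linarith
        have hq'a : q' < a := by rw [hq']; linarith
        have hgt' : α < (P {ω | Y ω < q'}).toReal := by
          by_contra hcon
          push_neg at hcon
          have hmono : (P {ω | Y ω ≤ q}).toReal ≤ (P {ω | Y ω ≤ q'}).toReal :=
            ENNReal.toReal_mono (measure_ne_top _ _)
              (measure_mono fun ω hω => le_trans hω hqq'.le)
          have : IsQuantile P Y α q' := ⟨hcon, by linarith⟩
          have := huniq q' this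
          linarith [hqq'.ne' this]
        set t : Set Ω := {ω | Y ω < q'} \ {ω | Y ω ≤ q} with hts
        have htmeas : MeasurableSet t := (hlt q').diff (hle q)
        have htpos : P t ≠ 0 := by
          intro h0
          have hsub : P {ω | Y ω < q'} ≤ P {ω | Y ω ≤ q} := by
            calc P {ω | Y ω < q'} ≤ P ({ω | Y ω ≤ q} ∪ t) := by
                  refine measure_mono fun ω hω => ?_
                  by_cases hc : Y ω ≤ q
                  · exact Or.inl hc
                  · exact Or.inr ⟨hω, hc⟩
              _ ≤ P {ω | Y ω ≤ q} + P t := measure_union_le _ _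
              _ = P {ω | Y ω ≤ q} := by rw [h0, add_zero]
          have := ENNReal.toReal_mono (measure_ne_top _ _) hsub
          linarith
        have htr : 0 < (P t).toReal := ENNReal.toReal_pos htpos (measure_ne_top _ _)
        have hlb : ∫ ω, t.indicator (fun _ => G a - G q') ω ∂P ≤
            ∫ ω, ({ω | q < Y ω ∧ Y ω ≤ a}).indicator (fun ω => G a - G (Y ω)) ω ∂P := by
          refine integral_mono ((integrable_const _).indicator htmeas)
            (((integrable_const (G a)).sub hGY).indicator
              ((hYm measurableSet_Ioi).inter (hle a))) fun ω => ?_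
          by_cases hω : ω ∈ t
          · have h1 := hω.1
            have h2 : q < Y ω := not_le.1 hω.2
            have hmem : ω ∈ {ω | q < Y ω ∧ Y ω ≤ a} := ⟨h2, le_of_lt (lt_trans h1 hq'a)⟩
            rw [Set.indicator_of_mem hω, Set.indicator_of_mem hmem]
            exact sub_le_sub_left (hG h1.le) _
          · rw [Set.indicator_of_notMem hω]
            exact Set.indicator_nonneg (fun ω hω => sub_nonneg.2 (hG hω.2)) ω
        have hval : ∫ ω, t.indicator (fun _ => G a - G q') ω ∂P = (P t).toReal * (G a - G q') := by
          rw [integral_indicator_const _ htmeas, smul_eq_mul, measureReal_def]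
        have : 0 < (P t).toReal * (G a - G q') :=
          mul_pos htr (sub_pos.2 (hSM hq'a))
        have ht1 : ((P {ω | Y ω ≤ q}).toReal - α) * (G a - G q) = 0 := by
          rw [← hcase]; ring
        linarith
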